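/- Let n = 2r+1 be odd and let q, p : ℝ×ℝ → ℂⁿ be twice continuously differentiable (q = q(x,t), p = p(x,t)). Define the (n+2)×(n+2) matrix-valued functions in (1,n,1) block form: Q = [[0, qᵀ, 0], [p, 0ₙ, s₀q], [0, pᵀs₀, 0]], A = [[0, qᵀ, 0], [−p, 0ₙ, s₀q], [0, −pᵀs₀, 0]] (so that [J, A] = Q for J = diag(1, 0, …, 0, −1)), V₁ = Q, and V₀ = i·∂ₓA + (1/2)(A·Q − Q·A). Then the zero-curvature equation i·∂ₓ(V₀ + λV₁) − i·∂ₜQ + [Q − λJ, V₀ + λV₁ − λ²J] = 0 holds for all λ ∈ ℂ and all (x,t) if and only if q and p satisfy the multi-component nonlinear Schrödinger system i·∂ₜq + ∂ₓ²q + 2(q,p)·q − (q, s₀q)·s₀p = 0 and i·∂ₜp − ∂ₓ²p − 2(q,p)·p + (p, s₀p)·s₀q = 0, where (u,v) = Σᵢ uᵢvᵢ is the standard bilinear pairing on ℂⁿ and [X,Y] = XY − YX. -/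

import Mathlib

open Matrix

noncomputable section

/-- The `n×n` matrix `s₀` with `(s₀)_{s,n+1−s} = (−1)^{s+1}` (1-indexed). -/
def s0mat (n : ℕ) : Matrix (Fin n) (Fin n) ℂ :=
  Matrix.of fun i j => if (i : ℕ) + (j : ℕ) + 1 = n then (-1 : ℂ) ^ (i : ℕ) else 0

/-- The Cartan element `J = diag(1, 0, …, 0, −1)` on the `(1,n,1)`-block index type. -/
def Jdiag (n : ℕ) : Matrix (Fin 1 ⊕ Fin n ⊕ Fin 1) (Fin 1 ⊕ Fin n ⊕ Fin 1) ℂ :=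
  Matrix.diagonal (Sum.elim (fun _ => 1) (Sum.elim (fun _ => 0) fun _ => -1))

/-- The BD.I potential `Q = [[0, qᵀ, 0], [p, 0ₙ, s₀q], [0, pᵀs₀, 0]]` in `(1,n,1)` block
form. -/
def Qpot (n : ℕ) (q p : Fin n → ℂ) :
    Matrix (Fin 1 ⊕ Fin n ⊕ Fin 1) (Fin 1 ⊕ Fin n ⊕ Fin 1) ℂ :=
  Matrix.of fun i j =>
    match i, j with
    | .inl _, .inr (.inl k) => q k
    | .inr (.inl k), .inl _ => p k
    | .inr (.inl k), .inr (.inr _) => (s0mat n *ᵥ q) k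
    | .inr (.inr _), .inr (.inl k) => (p ᵥ* s0mat n) k
    | _, _ => 0

/-- The matrix `A = ad_J⁻¹ Q = [[0, qᵀ, 0], [−p, 0ₙ, s₀q], [0, −pᵀs₀, 0]]`, so that
`[J, A] = Q`. -/
def Apot (n : ℕ) (q p : Fin n → ℂ) :
    Matrix (Fin 1 ⊕ Fin n ⊕ Fin 1) (Fin 1 ⊕ Fin n ⊕ Fin 1) ℂ :=
  Qpot n q (-p)

/-- `V₀ = i ∂ₓA + (1/2)(A Q − Q A)`, evaluated at `(x, t)`. -/
def V0pot (n : ℕ) (q p : ℝ → ℝ → Fin n → ℂ) (x t : ℝ) :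
    Matrix (Fin 1 ⊕ Fin n ⊕ Fin 1) (Fin 1 ⊕ Fin n ⊕ Fin 1) ℂ :=
  Complex.I • (Matrix.of fun i j => deriv (fun y => Apot n (q y t) (p y t) i j) x)
    + (2⁻¹ : ℂ) • (Apot n (q x t) (p x t) * Qpot n (q x t) (p x t)
        - Qpot n (q x t) (p x t) * Apot n (q x t) (p x t))


lemma neg_one_sq' (a : ℕ) : (-1:ℂ)^a * (-1:ℂ)^a = 1 := by
  rw [← pow_add, ← two_mul, pow_mul]; norm_num

lemma sigma_rev {r : ℕ} (j : Fin (2*r+1)) :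
    ((-1:ℂ) ^ ((j.rev : Fin (2*r+1)) : ℕ)) = (-1:ℂ)^(j:ℕ) := by
  have h1 : ((j.rev : Fin (2*r+1)) : ℕ) = 2*r - j := by rw [Fin.val_rev]; omega
  rw [h1]
  have h2 : 2*r - (j:ℕ) + (j:ℕ) = 2*r := by omega
  have h3 : (-1:ℂ)^(2*r - (j:ℕ)) * (-1:ℂ)^(j:ℕ) = 1 := by rw [← pow_add, h2]; simp [pow_mul]
  have hsq := neg_one_sq' (j:ℕ)
  calc (-1:ℂ)^(2*r-(j:ℕ))
      = (-1:ℂ)^(2*r-(j:ℕ)) * ((-1:ℂ)^(j:ℕ) * (-1:ℂ)^(j:ℕ)) := by rw [hsq, mul_one]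
    _ = ((-1:ℂ)^(2*r-(j:ℕ)) * (-1:ℂ)^(j:ℕ)) * (-1:ℂ)^(j:ℕ) := by ring
    _ = (-1:ℂ)^(j:ℕ) := by rw [h3, one_mul]

lemma mulVec_s0 {n : ℕ} (v : Fin n → ℂ) (i : Fin n) :
    (s0mat n *ᵥ v) i = (-1 : ℂ) ^ (i : ℕ) * v i.rev := by
  rw [mulVec, dotProduct]
  rw [Finset.sum_eq_single i.rev]
  · simp [s0mat, Fin.val_rev]
    intro h; exfalso; omega
  · intro j _ hj
    have h : (i:ℕ) + (j:ℕ) + 1 ≠ n := by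
      intro h; apply hj; apply Fin.ext; rw [Fin.val_rev]; omega
    simp only [s0mat, Matrix.of_apply]
    rw [if_neg h, zero_mul]
  · simp

lemma vecMul_s0 {r : ℕ} (v : Fin (2*r+1) → ℂ) (j : Fin (2*r+1)) :
    (v ᵥ* s0mat (2*r+1)) j = (-1 : ℂ) ^ (j : ℕ) * v j.rev := by
  rw [vecMul, dotProduct]
  rw [Finset.sum_eq_single j.rev]
  · rw [show s0mat (2*r+1) j.rev j = (-1:ℂ)^((j.rev : Fin (2*r+1)):ℕ) by
      simp [s0mat, Fin.val_rev]; intro h; exfalso; omega]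
    rw [sigma_rev]; ring
  · intro i _ hi
    have h : (i:ℕ) + (j:ℕ) + 1 ≠ 2*r+1 := by
      intro h; apply hi; apply Fin.ext; rw [Fin.val_rev]; omega
    simp only [s0mat, Matrix.of_apply]
    rw [if_neg h, mul_zero]
  · simp

lemma sum_rev {n : ℕ} (f : Fin n → ℂ) : (∑ j, f (Fin.rev j)) = ∑ j, f j :=
  Fintype.sum_equiv (Fin.revPerm) _ _ (fun _ => rfl)

lemma sum_pair_rev {r : ℕ} (f g : Fin (2*r+1) → ℂ) :
    (∑ i : Fin (2*r+1), (-1:ℂ)^(i:ℕ) * (f i * g i.rev))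
      = ∑ i : Fin (2*r+1), (-1:ℂ)^(i:ℕ) * (g i * f i.rev) := by
  rw [← sum_rev (fun i => (-1:ℂ)^(i:ℕ) * (g i * f i.rev))]
  refine Finset.sum_congr rfl fun i _ => ?_
  rw [sigma_rev, Fin.rev_rev]; ring

lemma V0_apply (r : ℕ) (q p : ℝ → ℝ → Fin (2*r+1) → ℂ) (x t : ℝ) :
    V0pot (2*r+1) q p x t = Matrix.of (fun i j =>
      match i, j with
      | .inl _, .inl _ => q x t ⬝ᵥ p x t
      | .inl _, .inr (.inl k) => Complex.I * deriv (fun y => q y t k) x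
      | .inr (.inl j), .inl _ => -(Complex.I * deriv (fun y => p y t j) x)
      | .inr (.inl j), .inr (.inl k) => -(p x t j * q x t k)
          + (-1:ℂ)^(j:ℕ) * (-1:ℂ)^(k:ℕ) * (q x t j.rev * p x t k.rev)
      | .inr (.inl j), .inr (.inr _) =>
          Complex.I * ((-1:ℂ)^(j:ℕ) * deriv (fun y => q y t j.rev) x)
      | .inr (.inr _), .inr (.inl k) =>
          -(Complex.I * ((-1:ℂ)^(k:ℕ) * deriv (fun y => p y t k.rev) x))
      | .inr (.inr _), .inr (.inr _) => -(p x t ⬝ᵥ q x t)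
      | _, _ => 0) := by
  ext i j
  rcases i with i | i | i <;> rcases j with j | j | j <;>
    simp only [V0pot, Apot, Qpot, Matrix.add_apply, Matrix.smul_apply, Matrix.sub_apply,
      Matrix.mul_apply, Matrix.of_apply, smul_eq_mul, Fintype.sum_sum_type, Fin.sum_univ_one,
      mulVec_s0, vecMul_s0, Pi.neg_apply, dotProduct, deriv_const', mul_zero, zero_mul,
      add_zero, zero_add, neg_zero, neg_mul, mul_neg, neg_neg, sub_self, Finset.sum_const_zero,
      deriv_const_mul_field, deriv.fun_neg, Finset.sum_neg_distrib]
  all_goals try ring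
  have key : (∑ j : Fin (2*r+1), (-1:ℂ)^(j:ℕ) * p x t j.rev * ((-1:ℂ)^(j:ℕ) * q x t j.rev))
      = ∑ j : Fin (2*r+1), p x t j * q x t j := by
    rw [← sum_rev (fun j => p x t j * q x t j)]
    refine Finset.sum_congr rfl fun j _ => ?_
    have := neg_one_sq' (j:ℕ); linear_combination p x t j.rev * q x t j.rev * this
  simp only [pow_mul', neg_one_sq, one_pow, mul_one]
  exact congrArg Neg.neg (sum_rev (fun j => p x t j * q x t j))

def XQ (r : ℕ) (q p : ℝ → ℝ → Fin (2*r+1) → ℂ) (x t : ℝ) (k : Fin (2*r+1)) : ℂ :=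
  Complex.I * deriv (fun s => q x s k) t + deriv (fun y => deriv (fun z => q z t k) y) x
    + 2*(q x t ⬝ᵥ p x t)*q x t k
    - (q x t ⬝ᵥ s0mat (2*r+1) *ᵥ q x t) * ((s0mat (2*r+1) *ᵥ p x t) k)
def XP (r : ℕ) (q p : ℝ → ℝ → Fin (2*r+1) → ℂ) (x t : ℝ) (k : Fin (2*r+1)) : ℂ :=
  Complex.I * deriv (fun s => p x s k) t - deriv (fun y => deriv (fun z => p z t k) y) x
    - 2*(q x t ⬝ᵥ p x t)*p x t k
    + (p x t ⬝ᵥ s0mat (2*r+1) *ᵥ p x t) * ((s0mat (2*r+1) *ᵥ q x t) k)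

lemma key (r : ℕ) (q p : ℝ → ℝ → Fin (2 * r + 1) → ℂ)
    (hq : ContDiff ℝ 2 fun xt : ℝ × ℝ => q xt.1 xt.2)
    (hp : ContDiff ℝ 2 fun xt : ℝ × ℝ => p xt.1 xt.2)
    (lam : ℂ) (x t : ℝ) :
      Complex.I • (Matrix.of fun i j =>
          deriv (fun y => (V0pot (2 * r + 1) q p y t
            + lam • Qpot (2 * r + 1) (q y t) (p y t)) i j) x)
        - Complex.I • (Matrix.of fun i j =>
            deriv (fun s => Qpot (2 * r + 1) (q x s) (p x s) i j) t)
        + ((Qpot (2 * r + 1) (q x t) (p x t) - lam • Jdiag (2 * r + 1))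
              * (V0pot (2 * r + 1) q p x t + lam • Qpot (2 * r + 1) (q x t) (p x t)
                  - (lam ^ 2) • Jdiag (2 * r + 1))
            - (V0pot (2 * r + 1) q p x t + lam • Qpot (2 * r + 1) (q x t) (p x t)
                  - (lam ^ 2) • Jdiag (2 * r + 1))
              * (Qpot (2 * r + 1) (q x t) (p x t) - lam • Jdiag (2 * r + 1)))
      = Matrix.of (fun i j =>
      match i, j with
      | .inl _, .inr (.inl k) => -(XQ r q p x t k)
      | .inr (.inl j), .inl _ => -(XP r q p x t j)
      | .inr (.inl j), .inr (.inr _) => -((-1:ℂ)^(j:ℕ) * XQ r q p x t j.rev)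
      | .inr (.inr _), .inr (.inl k) => -((-1:ℂ)^(k:ℕ) * XP r q p x t k.rev)
      | _, _ => 0) := by
  have cq : ∀ j, ContDiff ℝ 2 (fun y => q y t j) :=
    fun j => (contDiff_pi.mp hq j).comp (contDiff_id.prodMk contDiff_const)
  have cp : ∀ j, ContDiff ℝ 2 (fun y => p y t j) :=
    fun j => (contDiff_pi.mp hp j).comp (contDiff_id.prodMk contDiff_const)
  have hdq : ∀ j, HasDerivAt (fun y => q y t j) (deriv (fun z => q z t j) x) x :=
    fun j => (((cq j).differentiable (by norm_num)) x).hasDerivAt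
  have hdp : ∀ j, HasDerivAt (fun y => p y t j) (deriv (fun z => p z t j) x) x :=
    fun j => (((cp j).differentiable (by norm_num)) x).hasDerivAt
  have hdq' : ∀ j, HasDerivAt (fun y => deriv (fun z => q z t j) y)
      (deriv (fun y => deriv (fun z => q z t j) y) x) x := by
    intro j
    have := (contDiff_succ_iff_deriv.mp
      (by exact_mod_cast cq j : ContDiff ℝ ((1:ℕ)+1) (fun y => q y t j))).2.2
    exact ((this.differentiable (by norm_num)) x).hasDerivAt
  have hdp' : ∀ j, HasDerivAt (fun y => deriv (fun z => p z t j) y)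
      (deriv (fun y => deriv (fun z => p z t j) y) x) x := by
    intro j
    have := (contDiff_succ_iff_deriv.mp
      (by exact_mod_cast cp j : ContDiff ℝ ((1:ℕ)+1) (fun y => p y t j))).2.2
    exact ((this.differentiable (by norm_num)) x).hasDerivAt
  ext i j
  rcases i with i | i | i <;> rcases j with j | j | j <;>
    simp only [V0_apply, Qpot, Jdiag, Matrix.add_apply, Matrix.smul_apply, Matrix.sub_apply,
      Matrix.mul_apply, Matrix.of_apply, Matrix.diagonal_apply, smul_eq_mul,
      Fintype.sum_sum_type, Fin.sum_univ_one, mulVec_s0, vecMul_s0, dotProduct,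
      Sum.elim_inl, Sum.elim_inr, Matrix.zero_apply,
      reduceCtorEq, Sum.inl.injEq, Sum.inr.injEq, if_true, if_false, ite_true, ite_false]
  · -- (inl, inl)
    simp only [mul_zero, zero_mul, add_zero, zero_add, sub_zero, zero_sub, neg_zero, neg_neg,
      mul_one, one_mul, deriv_const', eq_iff_true_of_subsingleton, if_true]
    have hd : deriv (fun y => ∑ i, q y t i * p y t i) x
        = (∑ i, deriv (fun z => q z t i) x * p x t i)
          + ∑ i, q x t i * deriv (fun z => p z t i) x := by
      rw [(HasDerivAt.fun_sum (fun i _ => (hdq i).fun_mul (hdp i))).deriv, Finset.sum_add_distrib]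
    have hs1 : (∑ x_1, q x t x_1 * (-(Complex.I * deriv (fun y => p y t x_1) x) + lam * p x t x_1))
        = (-Complex.I) * (∑ i, q x t i * deriv (fun z => p z t i) x)
          + lam * ∑ i, q x t i * p x t i := by
      simp only [Finset.mul_sum, ← Finset.sum_add_distrib]
      exact Finset.sum_congr rfl fun j _ => by ring
    have hs2 : (∑ x_1, (Complex.I * deriv (fun y => q y t x_1) x + lam * q x t x_1) * p x t x_1)
        = Complex.I * (∑ i, deriv (fun z => q z t i) x * p x t i)
          + lam * ∑ i, q x t i * p x t i := by
      simp only [Finset.mul_sum, ← Finset.sum_add_distrib]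
      exact Finset.sum_congr rfl fun j _ => by ring
    linear_combination Complex.I * hd + hs1 - hs2
  · -- (inl, mid j)
    simp only [mul_zero, zero_mul, add_zero, zero_add, sub_zero, zero_sub, neg_zero, neg_neg,
      mul_one, one_mul, deriv_const', eq_iff_true_of_subsingleton, if_true, ite_self,
      Finset.sum_const_zero]
    have hd : deriv (fun y => Complex.I * deriv (fun z => q z t j) y + lam * q y t j) x
        = Complex.I * deriv (fun y => deriv (fun z => q z t j) y) x
          + lam * deriv (fun z => q z t j) x := by
      exact (((hdq' j).const_mul Complex.I).add ((hdq j).const_mul lam)).deriv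
    have hs : (∑ x_1, q x t x_1 * (-(p x t x_1 * q x t j)
          + (-1:ℂ)^(x_1:ℕ) * (-1:ℂ)^(j:ℕ) * (q x t x_1.rev * p x t j.rev)))
        = (-(q x t j)) * (∑ i, q x t i * p x t i)
          + ((-1:ℂ)^(j:ℕ) * p x t j.rev) * (∑ i : Fin (2*r+1), q x t i * ((-1:ℂ)^(i:ℕ) * q x t i.rev)) := by
      simp only [Finset.mul_sum, ← Finset.sum_add_distrib]
      exact Finset.sum_congr rfl fun k _ => by ring
    simp only [XQ, dotProduct, mulVec_s0]
    linear_combination Complex.I * hd + hs + (deriv (fun y => deriv (fun z => q z t j) y) x) * Complex.I_sq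
  · -- (inl, last)
    simp only [mul_zero, zero_mul, add_zero, zero_add, sub_zero, zero_sub, neg_zero, neg_neg,
      mul_one, one_mul, deriv_const', eq_iff_true_of_subsingleton, if_true, ite_self,
      Finset.sum_const_zero]
    have hsA : (∑ x_1, q x t x_1 * (Complex.I * ((-1:ℂ)^(x_1:ℕ) * deriv (fun y => q y t x_1.rev) x)
          + lam * ((-1:ℂ)^(x_1:ℕ) * q x t x_1.rev)))
        = Complex.I * (∑ i : Fin (2*r+1), (-1:ℂ)^(i:ℕ) * (q x t i * deriv (fun z => q z t i.rev) x))
          + lam * (∑ i : Fin (2*r+1), (-1:ℂ)^(i:ℕ) * (q x t i * q x t i.rev)) := by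
      simp only [Finset.mul_sum, ← Finset.sum_add_distrib]
      exact Finset.sum_congr rfl fun k _ => by ring
    have hsB : (∑ x_1, (Complex.I * deriv (fun y => q y t x_1) x + lam * q x t x_1)
          * ((-1:ℂ)^(x_1:ℕ) * q x t x_1.rev))
        = Complex.I * (∑ i : Fin (2*r+1), (-1:ℂ)^(i:ℕ) * (deriv (fun z => q z t i) x * q x t i.rev))
          + lam * (∑ i : Fin (2*r+1), (-1:ℂ)^(i:ℕ) * (q x t i * q x t i.rev)) := by
      simp only [Finset.mul_sum, ← Finset.sum_add_distrib]
      exact Finset.sum_congr rfl fun k _ => by ring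
    have hrev := sum_pair_rev (r := r) (fun i => q x t i) (fun i => deriv (fun z => q z t i) x)
    linear_combination hsA - hsB + Complex.I * hrev
  · -- (mid i, inl)
    simp only [mul_zero, zero_mul, add_zero, zero_add, sub_zero, zero_sub, neg_zero, neg_neg,
      mul_one, one_mul, deriv_const', eq_iff_true_of_subsingleton, if_true, ite_self,
      Finset.sum_const_zero]
    have hd : deriv (fun y => -(Complex.I * deriv (fun z => p z t i) y) + lam * p y t i) x
        = -(Complex.I * deriv (fun y => deriv (fun z => p z t i) y) x)
          + lam * deriv (fun z => p z t i) x := by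
      exact ((((hdp' i).const_mul Complex.I).neg).add ((hdp i).const_mul lam)).deriv
    have hs : (∑ x_1, (-(p x t i * q x t x_1)
          + (-1:ℂ)^(i:ℕ) * (-1:ℂ)^(x_1:ℕ) * (q x t i.rev * p x t x_1.rev)) * p x t x_1)
        = (-(p x t i)) * (∑ k, q x t k * p x t k)
          + ((-1:ℂ)^(i:ℕ) * q x t i.rev) * (∑ k : Fin (2*r+1), p x t k * ((-1:ℂ)^(k:ℕ) * p x t k.rev)) := by
      simp only [Finset.mul_sum, ← Finset.sum_add_distrib]
      exact Finset.sum_congr rfl fun k _ => by ring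
    simp only [XP, dotProduct, mulVec_s0]
    linear_combination Complex.I * hd - hs - (deriv (fun y => deriv (fun z => p z t i) y) x) * Complex.I_sq
  · -- (mid i, mid j)
    simp only [mul_zero, zero_mul, add_zero, zero_add, sub_zero, zero_sub, neg_zero, neg_neg,
      mul_one, one_mul, deriv_const', eq_iff_true_of_subsingleton, if_true, ite_self,
      Finset.sum_const_zero]
    have hd : deriv (fun y => -(p y t i * q y t j)
          + (-1:ℂ)^(i:ℕ) * (-1:ℂ)^(j:ℕ) * (q y t i.rev * p y t j.rev)) x
        = -(deriv (fun z => p z t i) x * q x t j + p x t i * deriv (fun z => q z t j) x)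
          + (-1:ℂ)^(i:ℕ) * (-1:ℂ)^(j:ℕ)
            * (deriv (fun z => q z t i.rev) x * p x t j.rev
                + q x t i.rev * deriv (fun z => p z t j.rev) x) := by
      exact ((((hdp i).mul (hdq j)).neg).add
        (((hdq i.rev).mul (hdp j.rev)).const_mul ((-1:ℂ)^(i:ℕ) * (-1:ℂ)^(j:ℕ)))).deriv
    linear_combination Complex.I * hd
  · -- (mid i, last)
    simp only [mul_zero, zero_mul, add_zero, zero_add, sub_zero, zero_sub, neg_zero, neg_neg,
      mul_one, one_mul, mul_neg, deriv_const', eq_iff_true_of_subsingleton, if_true, ite_self,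
      Finset.sum_const_zero, deriv_const_mul_field]
    have hd : deriv (fun y => Complex.I * ((-1:ℂ)^(i:ℕ) * deriv (fun z => q z t i.rev) y)
          + lam * ((-1:ℂ)^(i:ℕ) * q y t i.rev)) x
        = Complex.I * ((-1:ℂ)^(i:ℕ) * deriv (fun y => deriv (fun z => q z t i.rev) y) x)
          + lam * ((-1:ℂ)^(i:ℕ) * deriv (fun z => q z t i.rev) x) := by
      exact ((((hdq' i.rev).const_mul ((-1:ℂ)^(i:ℕ))).const_mul Complex.I).add
        (((hdq i.rev).const_mul ((-1:ℂ)^(i:ℕ))).const_mul lam)).deriv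
    have hs : (∑ x_1 : Fin (2*r+1), (-(p x t i * q x t x_1)
          + (-1:ℂ)^(i:ℕ) * (-1:ℂ)^(x_1:ℕ) * (q x t i.rev * p x t x_1.rev))
            * ((-1:ℂ)^(x_1:ℕ) * q x t x_1.rev))
        = (-(p x t i)) * (∑ k : Fin (2*r+1), q x t k * ((-1:ℂ)^(k:ℕ) * q x t k.rev))
          + ((-1:ℂ)^(i:ℕ) * q x t i.rev) * (∑ k : Fin (2*r+1), p x t k.rev * q x t k.rev) := by
      rw [Finset.mul_sum, Finset.mul_sum, ← Finset.sum_add_distrib]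
      refine Finset.sum_congr rfl fun k _ => ?_
      linear_combination ((-1:ℂ)^(i:ℕ) * q x t i.rev * (q x t k.rev * p x t k.rev))
        * neg_one_sq' (k:ℕ)
    have hrev : (∑ k : Fin (2*r+1), p x t k.rev * q x t k.rev)
        = ∑ k : Fin (2*r+1), p x t k * q x t k := sum_rev (fun k => p x t k * q x t k)
    have hcomm : (∑ k : Fin (2*r+1), p x t k * q x t k)
        = ∑ k : Fin (2*r+1), q x t k * p x t k := Finset.sum_congr rfl fun k _ => mul_comm _ _
    simp only [XQ, dotProduct, mulVec_s0, Fin.rev_rev, sigma_rev]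
    linear_combination Complex.I * hd - hs
      - ((-1:ℂ)^(i:ℕ) * q x t i.rev) * hrev
      - (2 * (-1:ℂ)^(i:ℕ) * q x t i.rev) * hcomm
      + ((-1:ℂ)^(i:ℕ) * deriv (fun y => deriv (fun z => q z t i.rev) y) x) * Complex.I_sq
      - ((∑ k : Fin (2*r+1), q x t k * ((-1:ℂ)^(k:ℕ) * q x t k.rev)) * p x t i) * neg_one_sq' (i:ℕ)
  · -- (last, inl)
    simp only [mul_zero, zero_mul, add_zero, zero_add, sub_zero, zero_sub, neg_zero, neg_neg,
      mul_one, one_mul, mul_neg, deriv_const', eq_iff_true_of_subsingleton, if_true, ite_self,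
      Finset.sum_const_zero]
    have hsA : (∑ x_1 : Fin (2*r+1), (-1:ℂ)^(x_1:ℕ) * p x t x_1.rev
          * (-(Complex.I * deriv (fun y => p y t x_1) x) + lam * p x t x_1))
        = (-Complex.I) * (∑ k : Fin (2*r+1), (-1:ℂ)^(k:ℕ) * (deriv (fun z => p z t k) x * p x t k.rev))
          + lam * (∑ k : Fin (2*r+1), (-1:ℂ)^(k:ℕ) * (p x t k * p x t k.rev)) := by
      simp only [Finset.mul_sum, ← Finset.sum_add_distrib]
      exact Finset.sum_congr rfl fun k _ => by ring
    have hsB : (∑ x_1 : Fin (2*r+1), (-(Complex.I * ((-1:ℂ)^(x_1:ℕ) * deriv (fun y => p y t x_1.rev) x))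
          + lam * ((-1:ℂ)^(x_1:ℕ) * p x t x_1.rev)) * p x t x_1)
        = (-Complex.I) * (∑ k : Fin (2*r+1), (-1:ℂ)^(k:ℕ) * (p x t k * deriv (fun z => p z t k.rev) x))
          + lam * (∑ k : Fin (2*r+1), (-1:ℂ)^(k:ℕ) * (p x t k * p x t k.rev)) := by
      simp only [Finset.mul_sum, ← Finset.sum_add_distrib]
      exact Finset.sum_congr rfl fun k _ => by ring
    have hpair := sum_pair_rev (r := r) (fun k => deriv (fun z => p z t k) x) (fun k => p x t k)
    linear_combination hsA - hsB - Complex.I * hpair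
  · -- (last, mid j)
    simp only [mul_zero, zero_mul, add_zero, zero_add, sub_zero, zero_sub, neg_zero, neg_neg,
      mul_one, one_mul, mul_neg, deriv_const', eq_iff_true_of_subsingleton, if_true, ite_self,
      Finset.sum_const_zero, deriv_const_mul_field]
    have hd : deriv (fun y => -(Complex.I * ((-1:ℂ)^(j:ℕ) * deriv (fun z => p z t j.rev) y))
          + lam * ((-1:ℂ)^(j:ℕ) * p y t j.rev)) x
        = -(Complex.I * ((-1:ℂ)^(j:ℕ) * deriv (fun y => deriv (fun z => p z t j.rev) y) x))
          + lam * ((-1:ℂ)^(j:ℕ) * deriv (fun z => p z t j.rev) x) := by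
      exact (((((hdp' j.rev).const_mul ((-1:ℂ)^(j:ℕ))).const_mul Complex.I).neg).add
        (((hdp j.rev).const_mul ((-1:ℂ)^(j:ℕ))).const_mul lam)).deriv
    have hs : (∑ x_1 : Fin (2*r+1), (-1:ℂ)^(x_1:ℕ) * p x t x_1.rev
          * (-(p x t x_1 * q x t j)
            + (-1:ℂ)^(x_1:ℕ) * (-1:ℂ)^(j:ℕ) * (q x t x_1.rev * p x t j.rev)))
        = (-(q x t j)) * (∑ k : Fin (2*r+1), p x t k * ((-1:ℂ)^(k:ℕ) * p x t k.rev))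
          + ((-1:ℂ)^(j:ℕ) * p x t j.rev) * (∑ k : Fin (2*r+1), q x t k.rev * p x t k.rev) := by
      rw [Finset.mul_sum, Finset.mul_sum, ← Finset.sum_add_distrib]
      refine Finset.sum_congr rfl fun k _ => ?_
      linear_combination ((-1:ℂ)^(j:ℕ) * p x t j.rev * (q x t k.rev * p x t k.rev))
        * neg_one_sq' (k:ℕ)
    have hrev : (∑ k : Fin (2*r+1), q x t k.rev * p x t k.rev)
        = ∑ k : Fin (2*r+1), q x t k * p x t k := sum_rev (fun k => q x t k * p x t k)
    have hcomm : (∑ k : Fin (2*r+1), p x t k * q x t k)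
        = ∑ k : Fin (2*r+1), q x t k * p x t k := Finset.sum_congr rfl fun k _ => mul_comm _ _
    simp only [XP, dotProduct, mulVec_s0, Fin.rev_rev, sigma_rev]
    linear_combination Complex.I * hd + hs
      + ((-1:ℂ)^(j:ℕ) * p x t j.rev) * hrev
      + ((-1:ℂ)^(j:ℕ) * p x t j.rev) * hcomm
      - ((-1:ℂ)^(j:ℕ) * deriv (fun y => deriv (fun z => p z t j.rev) y) x) * Complex.I_sq
      + ((∑ k : Fin (2*r+1), p x t k * ((-1:ℂ)^(k:ℕ) * p x t k.rev)) * q x t j) * neg_one_sq' (j:ℕ)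
  · -- (last, last)
    simp only [mul_zero, zero_mul, add_zero, zero_add, sub_zero, zero_sub, neg_zero, neg_neg,
      mul_one, one_mul, mul_neg, deriv_const', eq_iff_true_of_subsingleton, if_true, ite_self,
      Finset.sum_const_zero]
    have hd : deriv (fun y => -∑ k : Fin (2*r+1), p y t k * q y t k) x
        = -((∑ k : Fin (2*r+1), deriv (fun z => p z t k) x * q x t k)
            + ∑ k : Fin (2*r+1), p x t k * deriv (fun z => q z t k) x) := by
      rw [((HasDerivAt.fun_sum (fun k _ => (hdp k).fun_mul (hdq k))).fun_neg).deriv, Finset.sum_add_distrib]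
    have hsA : (∑ x_1 : Fin (2*r+1), (-1:ℂ)^(x_1:ℕ) * p x t x_1.rev
          * (Complex.I * ((-1:ℂ)^(x_1:ℕ) * deriv (fun y => q y t x_1.rev) x)
            + lam * ((-1:ℂ)^(x_1:ℕ) * q x t x_1.rev)))
        = Complex.I * (∑ k : Fin (2*r+1), p x t k.rev * deriv (fun z => q z t k.rev) x)
          + lam * (∑ k : Fin (2*r+1), p x t k.rev * q x t k.rev) := by
      simp only [Finset.mul_sum, ← Finset.sum_add_distrib]
      refine Finset.sum_congr rfl fun k _ => ?_
      linear_combination ((Complex.I * deriv (fun z => q z t k.rev) x + lam * q x t k.rev)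
        * p x t k.rev) * neg_one_sq' (k:ℕ)
    have hsB : (∑ x_1 : Fin (2*r+1), (-(Complex.I * ((-1:ℂ)^(x_1:ℕ) * deriv (fun y => p y t x_1.rev) x))
          + lam * ((-1:ℂ)^(x_1:ℕ) * p x t x_1.rev)) * ((-1:ℂ)^(x_1:ℕ) * q x t x_1.rev))
        = (-Complex.I) * (∑ k : Fin (2*r+1), deriv (fun z => p z t k.rev) x * q x t k.rev)
          + lam * (∑ k : Fin (2*r+1), p x t k.rev * q x t k.rev) := by
      simp only [Finset.mul_sum, ← Finset.sum_add_distrib]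
      refine Finset.sum_congr rfl fun k _ => ?_
      linear_combination ((lam * p x t k.rev - Complex.I * deriv (fun z => p z t k.rev) x)
        * q x t k.rev) * neg_one_sq' (k:ℕ)
    have h1 : (∑ k : Fin (2*r+1), p x t k.rev * deriv (fun z => q z t k.rev) x)
        = ∑ k : Fin (2*r+1), p x t k * deriv (fun z => q z t k) x :=
      sum_rev (fun k => p x t k * deriv (fun z => q z t k) x)
    have h2 : (∑ k : Fin (2*r+1), deriv (fun z => p z t k.rev) x * q x t k.rev)
        = ∑ k : Fin (2*r+1), deriv (fun z => p z t k) x * q x t k :=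
      sum_rev (fun k => deriv (fun z => p z t k) x * q x t k)
    linear_combination Complex.I * hd + hsA - hsB + Complex.I * h1 + Complex.I * h2

/-- the zero-curvature equation
`i ∂ₓ(V₀ + λ V₁) − i ∂ₜ Q + [Q − λJ, V₀ + λ V₁ − λ² J] = 0` (for all `λ`) holds if and only
if `q`, `p` satisfy the multi-component NLS system on the BD.I symmetric space. -/
theorem zero_curvature_iff_mnls (r : ℕ) (q p : ℝ → ℝ → Fin (2 * r + 1) → ℂ)
    (hq : ContDiff ℝ 2 fun xt : ℝ × ℝ => q xt.1 xt.2)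
    (hp : ContDiff ℝ 2 fun xt : ℝ × ℝ => p xt.1 xt.2) :
    (∀ lam : ℂ, ∀ x t : ℝ,
      Complex.I • (Matrix.of fun i j =>
          deriv (fun y => (V0pot (2 * r + 1) q p y t
            + lam • Qpot (2 * r + 1) (q y t) (p y t)) i j) x)
        - Complex.I • (Matrix.of fun i j =>
            deriv (fun s => Qpot (2 * r + 1) (q x s) (p x s) i j) t)
        + ((Qpot (2 * r + 1) (q x t) (p x t) - lam • Jdiag (2 * r + 1))
              * (V0pot (2 * r + 1) q p x t + lam • Qpot (2 * r + 1) (q x t) (p x t)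
                  - (lam ^ 2) • Jdiag (2 * r + 1))
            - (V0pot (2 * r + 1) q p x t + lam • Qpot (2 * r + 1) (q x t) (p x t)
                  - (lam ^ 2) • Jdiag (2 * r + 1))
              * (Qpot (2 * r + 1) (q x t) (p x t) - lam • Jdiag (2 * r + 1))) = 0)
    ↔
    (∀ x t : ℝ,
      (Complex.I • (fun j => deriv (fun s => q x s j) t)
        + (fun j => deriv (fun y => deriv (fun z => q z t j) y) x)
        + (2 * (q x t ⬝ᵥ p x t)) • q x t
        - (q x t ⬝ᵥ s0mat (2 * r + 1) *ᵥ q x t) • (s0mat (2 * r + 1) *ᵥ p x t) = 0)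
      ∧
      (Complex.I • (fun j => deriv (fun s => p x s j) t)
        - (fun j => deriv (fun y => deriv (fun z => p z t j) y) x)
        - (2 * (q x t ⬝ᵥ p x t)) • p x t
        + (p x t ⬝ᵥ s0mat (2 * r + 1) *ᵥ p x t) • (s0mat (2 * r + 1) *ᵥ q x t) = 0)) := by
  constructor
  · intro h x t
    have hE : (Matrix.of (fun i j =>
        match i, j with
        | .inl _, .inr (.inl k) => -(XQ r q p x t k)
        | .inr (.inl j), .inl _ => -(XP r q p x t j)
        | .inr (.inl j), .inr (.inr _) => -((-1:ℂ)^(j:ℕ) * XQ r q p x t j.rev)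
        | .inr (.inr _), .inr (.inl k) => -((-1:ℂ)^(k:ℕ) * XP r q p x t k.rev)
        | _, _ => 0) : Matrix (Fin 1 ⊕ Fin (2*r+1) ⊕ Fin 1) (Fin 1 ⊕ Fin (2*r+1) ⊕ Fin 1) ℂ)
        = 0 := by
      rw [← key r q p hq hp 0 x t]; exact h 0 x t
    have hXQ : ∀ k, XQ r q p x t k = 0 := by
      intro k
      have h' := congrFun (congrFun hE (Sum.inl 0)) (Sum.inr (Sum.inl k))
      simpa using h'
    have hXP : ∀ k, XP r q p x t k = 0 := by
      intro k
      have h' := congrFun (congrFun hE (Sum.inr (Sum.inl k))) (Sum.inl 0)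
      simpa using h'
    constructor
    · funext k
      have := hXQ k
      simp only [XQ] at this
      simpa [Pi.add_apply, Pi.sub_apply, Pi.smul_apply, smul_eq_mul] using this
    · funext k
      have := hXP k
      simp only [XP] at this
      simpa [Pi.add_apply, Pi.sub_apply, Pi.smul_apply, smul_eq_mul, sub_add_eq_add_sub]
        using this
  · intro h lam x t
    rw [key r q p hq hp lam x t]
    have hXQ : ∀ k, XQ r q p x t k = 0 := by
      intro k
      have h1 := congrFun (h x t).1 k
      simp only [XQ]
      simpa [Pi.add_apply, Pi.sub_apply, Pi.smul_apply, smul_eq_mul] using h1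
    have hXP : ∀ k, XP r q p x t k = 0 := by
      intro k
      have h1 := congrFun (h x t).2 k
      simp only [XP]
      simpa [Pi.add_apply, Pi.sub_apply, Pi.smul_apply, smul_eq_mul, sub_add_eq_add_sub]
        using h1
    ext i j
    rcases i with i | i | i <;> rcases j with j | j | j <;>
      simp [Matrix.of_apply, Matrix.zero_apply, hXQ, hXP]

end
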